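/- Let h > 0, r ≥ 1, 0 < s < 1, and t > 0 be real numbers, and let c, q, x be real numbers with s·r·h < c < r·h, c ≤ s·r·h + (1−s)·h, q·h ≤ c², and x ≤ q/(2r). Then (2x − 2sc + (s² − t²)·r·h)/(2t(c − s·r·h)) < ((1−s)² − t²)/(2t(1−s)). -/

import Mathlib

theorem stmt_9 (h r s t c q x : ℝ) (hh : 0 < h) (hr : 1 ≤ r)
    (hs0 : 0 < s) (hs1 : s < 1) (ht : 0 < t)
    (hc1 : s * r * h < c) (hc2 : c < r * h) (hc3 : c ≤ s * r * h + (1 - s) * h)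
    (hq : q * h ≤ c ^ 2) (hx : x ≤ q / (2 * r)) :
    (2 * x - 2 * s * c + (s ^ 2 - t ^ 2) * r * h) / (2 * t * (c - s * r * h)) <
      ((1 - s) ^ 2 - t ^ 2) / (2 * t * (1 - s)) := by
  have hr0 : (0 : ℝ) < r := lt_of_lt_of_le one_pos hr
  have hu : 0 < c - s * r * h := sub_pos.2 hc1
  have hv : 0 < r * h - c := sub_pos.2 hc2
  have hx' : x * (2 * r) ≤ q := (le_div_iff₀ (by positivity)).1 hx
  have h2 : 2 * r * h * x ≤ c ^ 2 := by nlinarith [mul_le_mul_of_nonneg_right hx' hh.le]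
  have key : (2 * x - 2 * s * c + (s ^ 2 - t ^ 2) * r * h) * (1 - s) <
      ((1 - s) ^ 2 - t ^ 2) * (c - s * r * h) := by
    have hrh : 0 < r * h := by positivity
    have hk : 0 < (r * h - c) * ((1 - s) * (c - s * r * h) + t ^ 2 * (r * h)) := by
      apply mul_pos hv
      have : 0 < (1 - s) * (c - s * r * h) := mul_pos (by linarith) hu
      nlinarith [mul_pos (mul_pos ht ht) hrh]
    have hmul : (2 * x - 2 * s * c + (s ^ 2 - t ^ 2) * r * h) * ((1 - s) * (r * h)) <
        ((1 - s) ^ 2 - t ^ 2) * (c - s * r * h) * (r * h) := by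
      nlinarith [mul_le_mul_of_nonneg_right h2 (by linarith : (0:ℝ) ≤ 1 - s)]
    have := (mul_lt_mul_iff_left₀ hrh).1 (by nlinarith [hmul] : (2 * x - 2 * s * c + (s ^ 2 - t ^ 2) * r * h) * (1 - s) * (r * h) <
        ((1 - s) ^ 2 - t ^ 2) * (c - s * r * h) * (r * h))
    linarith
  rw [div_lt_div_iff₀ (by positivity) (by nlinarith : (0:ℝ) < 2 * t * (1 - s))]
  nlinarith [mul_lt_mul_of_pos_left key ht]
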